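/- Let A ⊂ ℝⁿ be an open bounded convex set with barycenter at the origin. Let f be convex with inf f = f(0) and ∫_A f* dλ = -τ. Then there exists r > 0 depending only on A such that f(x) ≥ (1/2)(f(0) + τ/λ(A)) + r|x| ≥ τ/λ(A) + r|x| for all x ∈ ℝⁿ. -/

import Mathlib

open MeasureTheory

set_option maxHeartbeats 1600000

/-- Uniform linear lower-growth estimate: for `A` open bounded convex with barycenter at
the origin, there is `r > 0` depending only on `A` such that every convex `f` with
`inf f = f 0` and `∫_A f* = -τ` satisfies
`f x ≥ (1/2)(f 0 + τ/λ(A)) + r‖x‖ ≥ τ/λ(A) + r‖x‖`. -/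
theorem stmt6 {n : ℕ} (A : Set (EuclideanSpace ℝ (Fin n)))
    (hA : A.Nonempty) (hopen : IsOpen A) (hbdd : Bornology.IsBounded A)
    (hconv : Convex ℝ A)
    (hbar : ∫ y in A, y = (0 : EuclideanSpace ℝ (Fin n))) :
    ∃ r > (0 : ℝ), ∀ (f fstar : EuclideanSpace ℝ (Fin n) → ℝ) (τ : ℝ),
      ConvexOn ℝ Set.univ f → (∀ x, f 0 ≤ f x) →
      (∀ y ∈ A, IsLUB {z : ℝ | ∃ x, z = (inner ℝ x y : ℝ) - f x} (fstar y)) →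
      IntegrableOn fstar A → (∫ y in A, fstar y = -τ) →
      ∀ x, (1 / 2) * (f 0 + τ / (volume A).toReal) + r * ‖x‖ ≤ f x ∧
        τ / (volume A).toReal + r * ‖x‖ ≤
          (1 / 2) * (f 0 + τ / (volume A).toReal) + r * ‖x‖ := by
  -- basic facts about `A`
  have hcomp : IsCompact (closure A) := hbdd.isCompact_closure
  have hmeas : MeasurableSet A := hopen.measurableSet
  have hfin : volume A < ⊤ :=
    lt_of_le_of_lt (measure_mono subset_closure) hcomp.measure_lt_top
  have hpos : 0 < volume A := hopen.measure_pos volume hA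
  have hV : 0 < (volume A).toReal := ENNReal.toReal_pos hpos.ne' hfin.ne
  obtain ⟨R₀, hR₀⟩ := (Metric.isBounded_iff_subset_closedBall 0).mp hbdd
  set R : ℝ := max R₀ 1 with hRdef
  have hR : 0 < R := lt_of_lt_of_le one_pos (le_max_right _ _)
  have hAR : ∀ y ∈ A, ‖y‖ ≤ R := fun y hy => by
    have := hR₀ hy
    simp only [Metric.mem_closedBall, dist_zero_right] at this
    exact this.trans (le_max_left _ _)
  have hcont_int : ∀ g : EuclideanSpace ℝ (Fin n) → ℝ, Continuous g →
      IntegrableOn g A volume := fun g hg =>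
    ((hg.continuousOn).integrableOn_compact hcomp).mono_set subset_closure
  have hid_int : IntegrableOn (fun y : EuclideanSpace ℝ (Fin n) => y) A volume :=
    ((continuous_id.continuousOn).integrableOn_compact hcomp).mono_set subset_closure
  have hbar0 : ∀ u : EuclideanSpace ℝ (Fin n), (∫ y in A, (inner ℝ u y : ℝ)) = 0 := by
    intro u
    have h := (innerSL ℝ u).integral_comp_comm (μ := volume.restrict A) hid_int
    simp only [innerSL_apply_apply] at h
    rw [h, hbar, inner_zero_right]
  have hinner_cont : ∀ u : EuclideanSpace ℝ (Fin n),
      Continuous (fun y : EuclideanSpace ℝ (Fin n) => (inner ℝ u y : ℝ)) := fun u =>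
    continuous_const.inner continuous_id
  -- the trivial case `n = 0`
  rcases Nat.eq_zero_or_pos n with hn | hn
  · refine ⟨1, one_pos, ?_⟩
    intro f fstar τ hfc hf0 hlub hfsi hint x
    haveI : Subsingleton (EuclideanSpace ℝ (Fin n)) := by
      subst hn
      infer_instance
    have hx0 : x = 0 := Subsingleton.elim _ _
    have hfs_lb : ∀ y ∈ A, -f 0 ≤ fstar y := by
      intro y hy
      have := (hlub y hy).1 ⟨0, rfl⟩
      simp only [inner_zero_left, zero_sub] at this
      linarith
    have hτ : τ ≤ f 0 * (volume A).toReal := by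
      have h1 : ∫ y in A, (-(f 0) : ℝ) ≤ ∫ y in A, fstar y :=
        setIntegral_mono_on (integrableOn_const hfin.ne) hfsi hmeas hfs_lb
      rw [hint, setIntegral_const, smul_eq_mul] at h1
      rw [measureReal_def] at h1
      nlinarith [h1]
    have hτV : τ / (volume A).toReal ≤ f 0 := by rw [div_le_iff₀ hV]; nlinarith
    rw [hx0]
    simp only [norm_zero, mul_zero, add_zero]
    constructor
    · linarith [hf0 0]
    · linarith
  -- the main case `0 < n`
  -- the quadratic form `Q u = ∫_A ⟨u,y⟩²`
  set Q : EuclideanSpace ℝ (Fin n) → ℝ :=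
    fun u => ∫ y in A, (inner ℝ u y : ℝ)^2 with hQdef
  have hQint : ∀ u : EuclideanSpace ℝ (Fin n),
      IntegrableOn (fun y => (inner ℝ u y : ℝ)^2) A volume := fun u =>
    hcont_int _ ((hinner_cont u).pow 2)
  have hQcont : ContinuousOn Q (Metric.sphere (0 : EuclideanSpace ℝ (Fin n)) 1) := by
    have hlip : LipschitzOnWith (2 * R^2 * (volume A).toReal).toNNReal Q
        (Metric.sphere (0 : EuclideanSpace ℝ (Fin n)) 1) := by
      apply LipschitzOnWith.of_dist_le_mul
      intro u hu v hv
      simp only [Metric.mem_sphere, dist_zero_right] at hu hv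
      rw [Real.dist_eq, hQdef]
      rw [← integral_sub (hQint u) (hQint v)]
      have hb : ∀ y ∈ A, ‖(inner ℝ u y : ℝ)^2 - (inner ℝ v y : ℝ)^2‖ ≤
          (2 * R^2 * dist u v) := by
        intro y hy
        have h1 : (inner ℝ u y : ℝ)^2 - (inner ℝ v y : ℝ)^2
            = (inner ℝ (u - v) y : ℝ) * (inner ℝ (u + v) y : ℝ) := by
          rw [inner_sub_left, inner_add_left]; ring
        rw [h1, Real.norm_eq_abs, abs_mul]
        have h2 : |(inner ℝ (u-v) y : ℝ)| ≤ ‖u - v‖ * R := by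
          refine (abs_real_inner_le_norm _ _).trans ?_
          exact mul_le_mul_of_nonneg_left (hAR y hy) (norm_nonneg _)
        have h3 : |(inner ℝ (u+v) y : ℝ)| ≤ 2 * R := by
          refine (abs_real_inner_le_norm _ _).trans ?_
          calc ‖u + v‖ * ‖y‖ ≤ 2 * ‖y‖ := by
                refine mul_le_mul_of_nonneg_right ?_ (norm_nonneg _)
                calc ‖u + v‖ ≤ ‖u‖ + ‖v‖ := norm_add_le _ _
                  _ = 2 := by rw [hu, hv]; norm_num
            _ ≤ 2 * R := by nlinarith [hAR y hy, norm_nonneg y]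
        calc |(inner ℝ (u-v) y : ℝ)| * |(inner ℝ (u+v) y : ℝ)|
            ≤ (‖u - v‖ * R) * (2 * R) := by
              apply mul_le_mul h2 h3 (abs_nonneg _)
              positivity
          _ = 2 * R^2 * dist u v := by rw [dist_eq_norm]; ring
      have := norm_setIntegral_le_of_norm_le_const (μ := volume) hfin hb
      rw [Real.norm_eq_abs, measureReal_def] at this
      refine this.trans ?_
      rw [Real.coe_toNNReal _ (by positivity)]
      ring_nf
      nlinarith [dist_nonneg (x := u) (y := v), ENNReal.toReal_nonneg (a := volume A),
        sq_nonneg R, hR]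
    exact hlip.continuousOn
  haveI : Nontrivial (EuclideanSpace ℝ (Fin n)) := by
    apply Module.nontrivial_of_finrank_pos (R := ℝ)
    rw [finrank_euclideanSpace_fin]; exact hn
  have hsph : (Metric.sphere (0 : EuclideanSpace ℝ (Fin n)) 1).Nonempty :=
    NormedSpace.sphere_nonempty.mpr zero_le_one
  obtain ⟨u₀, hu₀, hmin⟩ :=
    (isCompact_sphere (0 : EuclideanSpace ℝ (Fin n)) 1).exists_isMinOn hsph hQcont
  set c : ℝ := Q u₀ with hcdef
  have hQmin : ∀ u : EuclideanSpace ℝ (Fin n), ‖u‖ = 1 →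
      c ≤ ∫ y in A, (inner ℝ u y : ℝ)^2 := by
    intro u hu
    exact hmin (by simpa [mem_sphere_zero_iff_norm] using hu)
  have hc : 0 < c := by
    rw [hcdef, hQdef]
    rw [setIntegral_pos_iff_support_of_nonneg_ae]
    · have hker : volume {y : EuclideanSpace ℝ (Fin n) | (inner ℝ u₀ y : ℝ) = 0} = 0 := by
        have : ({y : EuclideanSpace ℝ (Fin n) | (inner ℝ u₀ y : ℝ) = 0} : Set _)
            = (LinearMap.ker (innerSL ℝ u₀).toLinearMap :
              Submodule ℝ (EuclideanSpace ℝ (Fin n))) := by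
          ext y; simp [LinearMap.mem_ker]
        rw [this]
        apply Measure.addHaar_submodule
        intro htop
        have hu0 : u₀ ∈ LinearMap.ker (innerSL ℝ u₀).toLinearMap := by rw [htop]; trivial
        simp only [LinearMap.mem_ker] at hu0
        have hnu : ‖u₀‖ = 1 := by simpa using hu₀
        rw [ContinuousLinearMap.coe_coe, innerSL_apply_apply, real_inner_self_eq_norm_sq, hnu] at hu0
        norm_num at hu0
      have hsub : A \ {y : EuclideanSpace ℝ (Fin n) | (inner ℝ u₀ y : ℝ) = 0}
          ⊆ Function.support (fun y => (inner ℝ u₀ y : ℝ)^2) ∩ A := by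
        intro y hy
        refine ⟨?_, hy.1⟩
        simp only [Function.mem_support]
        intro h
        exact hy.2 (by simpa using pow_eq_zero_iff (n := 2) (by norm_num) |>.mp h)
      calc (0 : ENNReal) < volume A := hpos
        _ = volume (A \ {y : EuclideanSpace ℝ (Fin n) | (inner ℝ u₀ y : ℝ) = 0}) :=
            (measure_diff_null hker).symm
        _ ≤ _ := measure_mono hsub
    · exact Filter.Eventually.of_forall fun y => sq_nonneg _
    · exact hQint u₀
  -- the uniform constant
  set V : ℝ := (volume A).toReal with hVdef
  set r : ℝ := c / (8 * R * V) with hrdef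
  refine ⟨r, by positivity, ?_⟩
  intro f fstar τ hfc hf0 hlub hfsi hint
  have hfen : ∀ x, ∀ y ∈ A, (inner ℝ x y : ℝ) - f x ≤ fstar y := fun x y hy =>
    (hlub y hy).1 ⟨x, rfl⟩
  have hfs_lb : ∀ y ∈ A, -f 0 ≤ fstar y := by
    intro y hy
    have := hfen 0 y hy
    rwa [inner_zero_left, zero_sub] at this
  have hτ : τ ≤ f 0 * V := by
    have h1 : ∫ y in A, (-(f 0) : ℝ) ≤ ∫ y in A, fstar y :=
      setIntegral_mono_on (integrableOn_const hfin.ne) hfsi hmeas hfs_lb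
    rw [hint, setIntegral_const, smul_eq_mul] at h1
    rw [measureReal_def] at h1
    nlinarith [h1]
  have hτV : τ / V ≤ f 0 := by rw [div_le_iff₀ hV]; nlinarith
  -- the key growth estimate for `x ≠ 0`
  have key : ∀ x : EuclideanSpace ℝ (Fin n), x ≠ 0 →
      τ + (c / (2 * R)) * ‖x‖ - (1/2) * (f 0 * V - τ) ≤ f x * V := by
    intro x hx
    set ε : ℝ := 1 / (2 * R) with hεdef
    have hε : 0 < ε := by positivity
    have hεR : ε * R = 1/2 := by rw [hεdef]; field_simp
    set u : EuclideanSpace ℝ (Fin n) := ‖x‖⁻¹ • x with hudef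
    have hxn : (0:ℝ) < ‖x‖ := norm_pos_iff.mpr hx
    have hu1 : ‖u‖ = 1 := by
      rw [hudef, norm_smul, norm_inv, norm_norm, inv_mul_cancel₀ hxn.ne']
    have hxu : ∀ y : EuclideanSpace ℝ (Fin n), (inner ℝ x y : ℝ) = ‖x‖ * (inner ℝ u y : ℝ) := by
      intro y
      have : x = ‖x‖ • u := by
        rw [hudef, smul_smul, mul_inv_cancel₀ hxn.ne', one_smul]
      conv_lhs => rw [this]
      rw [real_inner_smul_left]
    have huy : ∀ y ∈ A, |(inner ℝ u y : ℝ)| ≤ R := by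
      intro y hy
      refine (abs_real_inner_le_norm _ _).trans ?_
      rw [hu1, one_mul]; exact hAR y hy
    set w : EuclideanSpace ℝ (Fin n) → ℝ := fun y => 1 + ε * (inner ℝ u y : ℝ) with hwdef
    have hw_cont : Continuous w := continuous_const.add (continuous_const.mul (hinner_cont u))
    have hw_nonneg : ∀ y ∈ A, 0 ≤ w y := by
      intro y hy
      have h1 : -R ≤ (inner ℝ u y : ℝ) := (abs_le.mp (huy y hy)).1
      have := mul_le_mul_of_nonneg_left h1 hε.le
      simp only [hwdef]
      nlinarith
    -- integrability pieces
    have hI1 : IntegrableOn (fun y => (inner ℝ x y : ℝ)) A volume := hcont_int _ (hinner_cont x)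
    have hI2 : IntegrableOn (fun y => (inner ℝ x y : ℝ) * (inner ℝ u y : ℝ)) A volume :=
      hcont_int _ ((hinner_cont x).mul (hinner_cont u))
    have hIu : IntegrableOn (fun y => (inner ℝ u y : ℝ)) A volume := hcont_int _ (hinner_cont u)
    have hubd : ∀ᵐ y ∂(volume.restrict A), ‖(inner ℝ u y : ℝ)‖ ≤ R :=
      (ae_restrict_iff' hmeas).mpr (Filter.Eventually.of_forall fun y hy => by
        rw [Real.norm_eq_abs]; exact huy y hy)
    have hI3 : IntegrableOn (fun y => fstar y * (inner ℝ u y : ℝ)) A volume := by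
      have h := Integrable.bdd_mul (c := R) hfsi ((hinner_cont u).aestronglyMeasurable) hubd
      simpa [mul_comm, IntegrableOn] using h
    have hILa : IntegrableOn
        (fun y => (inner ℝ x y : ℝ) + ε * ((inner ℝ x y : ℝ) * (inner ℝ u y : ℝ))) A volume :=
      hI1.add (hI2.const_mul ε)
    have hILb : IntegrableOn (fun y => fstar y + ε * (fstar y * (inner ℝ u y : ℝ))) A volume :=
      hfsi.add (hI3.const_mul ε)
    have hexp : (fun y : EuclideanSpace ℝ (Fin n) => ((inner ℝ x y : ℝ) - fstar y) * w y)
        = fun y => ((inner ℝ x y : ℝ) + ε * ((inner ℝ x y : ℝ) * (inner ℝ u y : ℝ)))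
            - (fstar y + ε * (fstar y * (inner ℝ u y : ℝ))) := by
      funext y; simp only [hwdef]; ring
    have hIL : IntegrableOn (fun y => ((inner ℝ x y : ℝ) - fstar y) * w y) A volume := by
      rw [hexp]; exact hILa.sub hILb
    have hIR : IntegrableOn (fun y => f x * w y) A volume :=
      hcont_int _ (continuous_const.mul hw_cont)
    -- main monotonicity step
    have hstep : ∫ y in A, ((inner ℝ x y : ℝ) - fstar y) * w y ≤ ∫ y in A, f x * w y := by
      refine setIntegral_mono_on hIL hIR hmeas fun y hy => ?_
      exact mul_le_mul_of_nonneg_right (by linarith [hfen x y hy]) (hw_nonneg y hy)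
    -- the right-hand side
    have hW : ∫ y in A, w y = V := by
      simp only [hwdef]
      rw [integral_add (integrableOn_const (C := (1:ℝ)) hfin.ne) (hIu.const_mul ε),
        integral_const_mul, hbar0 u, setIntegral_const]
      simp [measureReal_def, hVdef]
    have hRHS : ∫ y in A, f x * w y = f x * V := by
      rw [integral_const_mul, hW]
    -- the left-hand side
    have hQux : ∫ y in A, (inner ℝ x y : ℝ) * (inner ℝ u y : ℝ)
        = ‖x‖ * ∫ y in A, (inner ℝ u y : ℝ)^2 := by
      rw [← integral_const_mul]
      refine setIntegral_congr_fun hmeas fun y _ => ?_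
      rw [hxu y]; ring
    have hLHS : ∫ y in A, ((inner ℝ x y : ℝ) - fstar y) * w y
        = ε * (‖x‖ * ∫ y in A, (inner ℝ u y : ℝ)^2) + τ
          - ε * ∫ y in A, fstar y * (inner ℝ u y : ℝ) := by
      rw [hexp, integral_sub hILa hILb,
        integral_add hI1 (hI2.const_mul ε), integral_add hfsi (hI3.const_mul ε),
        integral_const_mul, integral_const_mul, hbar0 x, hQux, hint]
      ring
    -- bound the `fstar` cross term
    have hS : ∫ y in A, fstar y * (inner ℝ u y : ℝ) ≤ R * (f 0 * V - τ) := by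
      have hIsum : IntegrableOn (fun y => (fstar y + f 0) * (inner ℝ u y : ℝ)) A volume := by
        have heq : (fun y : EuclideanSpace ℝ (Fin n) => (fstar y + f 0) * (inner ℝ u y : ℝ))
            = fun y => fstar y * (inner ℝ u y : ℝ) + f 0 * (inner ℝ u y : ℝ) := by
          funext y; ring
        rw [heq]; exact hI3.add (hIu.const_mul (f 0))
      have hIsumR : IntegrableOn (fun y => (fstar y + f 0) * R) A volume :=
        (hfsi.add (integrableOn_const hfin.ne)).mul_const R
      have h1 : ∫ y in A, (fstar y + f 0) * (inner ℝ u y : ℝ)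
          ≤ ∫ y in A, (fstar y + f 0) * R := by
        refine setIntegral_mono_on hIsum hIsumR hmeas fun y hy => ?_
        refine mul_le_mul_of_nonneg_left ?_ (by linarith [hfs_lb y hy])
        exact (abs_le.mp (huy y hy)).2
      have h2 : ∫ y in A, (fstar y + f 0) * (inner ℝ u y : ℝ)
          = (∫ y in A, fstar y * (inner ℝ u y : ℝ)) + f 0 * ∫ y in A, (inner ℝ u y : ℝ) := by
        rw [← integral_const_mul, ← integral_add hI3 (hIu.const_mul (f 0))]
        refine setIntegral_congr_fun hmeas fun y _ => ?_
        ring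
      have h3 : ∫ y in A, (fstar y + f 0) * R
          = ((∫ y in A, fstar y) + f 0 * V) * R := by
        rw [integral_mul_const, integral_add hfsi (integrableOn_const hfin.ne),
          setIntegral_const, smul_eq_mul, measureReal_def, hVdef]
        ring
      rw [h2, hbar0 u, mul_zero, add_zero] at h1
      rw [h3, hint] at h1
      calc ∫ y in A, fstar y * (inner ℝ u y : ℝ) ≤ (-τ + f 0 * V) * R := h1
        _ = R * (f 0 * V - τ) := by ring
    -- combine everything
    have hQu := hQmin u hu1
    have hA1 : ε * (‖x‖ * c) ≤ ε * (‖x‖ * ∫ y in A, (inner ℝ u y : ℝ)^2) :=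
      mul_le_mul_of_nonneg_left (mul_le_mul_of_nonneg_left hQu hxn.le) hε.le
    have hA2 : ε * (∫ y in A, fstar y * (inner ℝ u y : ℝ)) ≤ ε * (R * (f 0 * V - τ)) :=
      mul_le_mul_of_nonneg_left hS hε.le
    have hεc : ε * (‖x‖ * c) = (c / (2*R)) * ‖x‖ := by rw [hεdef]; ring
    have hεR2 : ε * (R * (f 0 * V - τ)) = (1/2) * (f 0 * V - τ) := by
      rw [← mul_assoc, hεR]
    rw [hRHS, hLHS] at hstep
    linarith
  -- conclude
  intro x
  constructor
  · rcases eq_or_ne x 0 with hx | hx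
    · rw [hx]
      simp only [norm_zero, mul_zero, add_zero]
      linarith [hf0 x, hτV, hf0 0]
    · have K := key x hx
      have hK2 : f 0 * V ≤ f x * V := mul_le_mul_of_nonneg_right (hf0 x) hV.le
      rw [← mul_le_mul_iff_left₀ hV]
      have e1 : (τ/V) * V = τ := div_mul_cancel₀ _ hV.ne'
      have e2 : r * V = c / (8*R) := by rw [hrdef]; field_simp
      have e3 : ((1 / 2) * (f 0 + τ / V) + r * ‖x‖) * V
          = (1/2) * (f 0 * V) + (1/2) * τ + (c / (8*R)) * ‖x‖ := by
        have h' : ((1 / 2) * (f 0 + τ / V) + r * ‖x‖) * V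
            = (1/2) * (f 0 * V) + (1/2) * ((τ/V) * V) + (r * V) * ‖x‖ := by ring
        rw [h', e1, e2]
      rw [e3]
      have e4 : c / (8*R) = (1/4) * (c / (2*R)) := by ring
      rw [e4]
      linarith
  · have : τ / V ≤ (1/2) * (f 0 + τ/V) := by linarith
    linarith
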